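/- The SSPA cooperation operator is commutative up to strong bisimilarity: for any finite family of simple processes M₁, …, M_N forming a valid interacting process over a cooperation set L ⊆ Act, and any permutation σ of {1, …, N}, the interacting processes ⊕_L(M₁, …, M_N) and ⊕_L(M_{σ(1)}, …, M_{σ(N)}) are strongly bisimilar. -/

import Mathlib

/-! SSPA simple processes.  A prefix `(a, r).E` is encoded as a triple
`(a, r, E)` where the rate `r : Option ℝ` is `some μ` for a real rate `μ` and
`none` for the label-indexed variable `x_a`.  Identifiers `D` come with
defining equations given by an environment `defs : Idf → Proc Act Idf`. -/

inductive Proc (Act : Type) (Idf : Type) : Type where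
  | nil : Proc Act Idf
  | idf : Idf → Proc Act Idf
  | choice : List (Act × Option ℝ × Proc Act Idf) → Proc Act Idf
  | close : Proc Act Idf → Act → ℝ → Proc Act Idf

/-- The labelled transition relation of SSPA simple processes: the smallest
relation closed under the prefix/choice rule, the identifier rule, and the
closure rules (closure replaces the variable `x_a` by `λ` on passive
`a`-transitions, leaves other transitions unchanged, and propagates to the
derivative). -/
inductive Step {Act Idf : Type} (defs : Idf → Proc Act Idf) :
    Proc Act Idf → Act × Option ℝ → Proc Act Idf → Prop where
  | choice {bs : List (Act × Option ℝ × Proc Act Idf)} {a r E}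
      (h : (a, r, E) ∈ bs) : Step defs (.choice bs) (a, r) E
  | idf {D ℓ E'} (h : Step defs (defs D) ℓ E') : Step defs (.idf D) ℓ E'
  | closePas {M a lam M'} (h : Step defs M (a, none) M') :
      Step defs (.close M a lam) (a, some lam) (.close M' a lam)
  | closeAct {M a lam mu M'} (h : Step defs M (a, some mu) M') :
      Step defs (.close M a lam) (a, some mu) (.close M' a lam)
  | closeOther {M a lam b r M'} (hb : b ≠ a) (h : Step defs M (b, r) M') :
      Step defs (.close M a lam) (b, r) (.close M' a lam)

/-- `PassiveMem defs a M` means `a ∈ 𝒫(M)`, the recursively defined set of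
passive labels of `M`: `𝒫(0) = ∅`; `𝒫(D) = 𝒫(M)` when `D ≝ M`;
`𝒫(∑ (aᵢ,rᵢ).Eᵢ) = {aᵢ : rᵢ is a variable} ∪ ⋃ᵢ 𝒫(Eᵢ)`;
`𝒫(M[a←λ]) = 𝒫(M) \ {a}`. -/
inductive PassiveMem {Act Idf : Type} (defs : Idf → Proc Act Idf) :
    Act → Proc Act Idf → Prop where
  | choiceVar {bs : List (Act × Option ℝ × Proc Act Idf)} {a E}
      (h : (a, (none : Option ℝ), E) ∈ bs) : PassiveMem defs a (.choice bs)
  | choiceCont {bs : List (Act × Option ℝ × Proc Act Idf)} {a b r E}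
      (h : (b, r, E) ∈ bs) (hE : PassiveMem defs a E) : PassiveMem defs a (.choice bs)
  | idf {D a} (h : PassiveMem defs a (defs D)) : PassiveMem defs a (.idf D)
  | close {M a b lam} (h : PassiveMem defs b M) (hne : b ≠ a) :
      PassiveMem defs b (.close M a lam)

/-- `ActiveMem defs a M` means `a ∈ 𝒜(M)`, the recursively defined set of
active labels of `M`: `𝒜(0) = ∅`; `𝒜(D) = 𝒜(M)` when `D ≝ M`;
`𝒜(∑ (aᵢ,rᵢ).Eᵢ) = {aᵢ : rᵢ ∈ ℝ⁺} ∪ ⋃ᵢ 𝒜(Eᵢ)`; `𝒜(M[a←λ]) = 𝒜(M) ∪ {a}`. -/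
inductive ActiveMem {Act Idf : Type} (defs : Idf → Proc Act Idf) :
    Act → Proc Act Idf → Prop where
  | choiceReal {bs : List (Act × Option ℝ × Proc Act Idf)} {a lam E}
      (h : (a, (some lam : Option ℝ), E) ∈ bs) : ActiveMem defs a (.choice bs)
  | choiceCont {bs : List (Act × Option ℝ × Proc Act Idf)} {a b r E}
      (h : (b, r, E) ∈ bs) (hE : ActiveMem defs a E) : ActiveMem defs a (.choice bs)
  | idf {D a} (h : ActiveMem defs a (defs D)) : ActiveMem defs a (.idf D)
  | closeSelf {M a lam} : ActiveMem defs a (.close M a lam)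
  | closeOther {M a b lam} (h : ActiveMem defs b M) : ActiveMem defs b (.close M a lam)

/-- The semantics of the n-ary cooperation operator `⊕_L(M₁, …, M_N)`, whose
state is the tuple of component states: a transition on a label outside `L`
moves a single component; a transition on a label in `L` is a strictly
pairwise cooperation between one active component (real rate `λ`) and one
passive component (variable `x_a`), and carries the active rate `λ`. -/
inductive CoopStep {Act Idf : Type} {N : ℕ} (defs : Idf → Proc Act Idf) (L : Set Act) :
    (Fin N → Proc Act Idf) → Act × Option ℝ → (Fin N → Proc Act Idf) → Prop where
  | solo {f : Fin N → Proc Act Idf} {i a r M'}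
      (ha : a ∉ L) (h : Step defs (f i) (a, r) M') :
      CoopStep defs L f (a, r) (Function.update f i M')
  | coop {f : Fin N → Proc Act Idf} {i k a lam Mi' Mk'}
      (ha : a ∈ L) (hik : i ≠ k)
      (hi : Step defs (f i) (a, some lam) Mi') (hk : Step defs (f k) (a, none) Mk') :
      CoopStep defs L f (a, some lam) (Function.update (Function.update f i Mi') k Mk')

/-- A strong bisimulation between states of the n-ary cooperation. -/
def IsCoopBisimulation {Act Idf : Type} {N : ℕ} (defs : Idf → Proc Act Idf) (L : Set Act)
    (R : (Fin N → Proc Act Idf) → (Fin N → Proc Act Idf) → Prop) : Prop :=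
  Symmetric R ∧
    ∀ f₁ f₂, R f₁ f₂ → ∀ ℓ f₁', CoopStep defs L f₁ ℓ f₁' →
      ∃ f₂', CoopStep defs L f₂ ℓ f₂' ∧ R f₁' f₂'

/-- Strong bisimilarity of states of the n-ary cooperation. -/
def CoopBisimilar {Act Idf : Type} {N : ℕ} (defs : Idf → Proc Act Idf) (L : Set Act)
    (f₁ f₂ : Fin N → Proc Act Idf) : Prop :=
  ∃ R, IsCoopBisimulation defs L R ∧ R f₁ f₂

/-- Commutativity of the SSPA cooperation operator: for any valid interacting
process `⊕_L(M₁, …, M_N)` (no label of `L` is active in two distinct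
components, nor passive in two distinct components) and any permutation `σ`,
the processes `⊕_L(M₁, …, M_N)` and `⊕_L(M_{σ(1)}, …, M_{σ(N)})` are strongly
bisimilar. -/
private lemma coopStep_comp_perm {Act Idf : Type} {N : ℕ} (defs : Idf → Proc Act Idf)
    (L : Set Act) (σ : Equiv.Perm (Fin N)) {g g' : Fin N → Proc Act Idf} {ℓ}
    (h : CoopStep defs L g ℓ g') : CoopStep defs L (g ∘ σ) ℓ (g' ∘ σ) := by
  cases h with
  | solo ha hs =>
    rename_i i a r M'
    rw [Function.update_comp_equiv]
    exact CoopStep.solo ha (by simpa using hs)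
  | coop ha hik hi hk =>
    rename_i i k a lam Mi' Mk'
    rw [Function.update_comp_equiv, Function.update_comp_equiv]
    exact CoopStep.coop ha (fun e => hik (σ.symm.injective e)) (by simpa using hi)
      (by simpa using hk)

theorem coop_comm {Act Idf : Type} {N : ℕ} (defs : Idf → Proc Act Idf) (L : Set Act)
    (M : Fin N → Proc Act Idf)
    (hact : ∀ i j, i ≠ j → ∀ a ∈ L, ActiveMem defs a (M i) → ActiveMem defs a (M j) → False)
    (hpas : ∀ i j, i ≠ j → ∀ a ∈ L, PassiveMem defs a (M i) → PassiveMem defs a (M j) → False)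
    (σ : Equiv.Perm (Fin N)) :
    CoopBisimilar defs L M (M ∘ σ) := by
  refine ⟨fun g h => h = g ∘ σ ∨ g = h ∘ σ, ⟨?_, ?_⟩, Or.inl rfl⟩
  · rintro g h (rfl | rfl)
    · exact Or.inr rfl
    · exact Or.inl rfl
  · rintro g h (rfl | rfl) ℓ g' hstep
    · exact ⟨g' ∘ σ, coopStep_comp_perm defs L σ hstep, Or.inl rfl⟩
    · refine ⟨g' ∘ σ.symm, ?_, Or.inr ?_⟩
      · have := coopStep_comp_perm defs L σ.symm hstep
        simpa [Function.comp_assoc] using this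
      · ext x; simp
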